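/- arXiv:1103.2795 — 3 statements merged into one kernel-verified Lean document; each statement's English description precedes it below -/
import Mathlib

section
/- Let L be the Laplacian of a connected weighted graph partitioned as [[L_gg, L_gl],[L_lg, L_ll]] with at least one node in each block. Then the Schur complement L_gg - L_gl L_ll^{-1} L_lg is symmetric positive semidefinite with kernel containing the all-ones vector. -/
open Matrix

lemma posDef_of_posSemidef_isUnit_det {m : ℕ} {D : Matrix (Fin m) (Fin m) ℝ}
    (hD : D.PosSemidef) (hdet : IsUnit D.det) : D.PosDef := by
  refine posDef_iff_dotProduct_mulVec.2 ⟨hD.1, fun x hx => ?_⟩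
  rcases lt_or_eq_of_le (hD.dotProduct_mulVec_nonneg x) with h | h
  · exact h
  · exfalso
    have h0 : star x ⬝ᵥ D *ᵥ x = 0 := h.symm
    rw [hD.dotProduct_mulVec_zero_iff] at h0
    have hinj := Matrix.mulVec_injective_iff_isUnit.2 (Matrix.isUnit_iff_isUnit_det D |>.2 hdet)
    exact hx (hinj (show D *ᵥ x = D *ᵥ 0 by simpa using h0))

/-- Let `L` be the Laplacian of a connected weighted graph, partitioned into
blocks `[[L_gg, L_gl],[L_lg, L_ll]]` (indexing by `Fin n ⊕ Fin m`, each block nonempty).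
`L` is symmetric positive semidefinite with zero row sums, and `L_ll` is invertible (by
connectivity).  Then the Schur complement (Kron-reduced Laplacian)
`L_gg - L_gl * L_ll⁻¹ * L_lg` is symmetric positive semidefinite and its kernel contains the
all-ones vector. -/
theorem kron_reduced_laplacian_posSemidef_ones_in_kernel
    {n m : ℕ} (hn : 0 < n) (hm : 0 < m)
    (L : Matrix (Fin n ⊕ Fin m) (Fin n ⊕ Fin m) ℝ)
    (hsym : L.IsSymm)
    (hpsd : L.PosSemidef)
    (hrow : L.mulVec (fun _ => (1 : ℝ)) = 0)
    (Lgg : Matrix (Fin n) (Fin n) ℝ) (hgg : Lgg = L.toBlocks₁₁)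
    (Lgl : Matrix (Fin n) (Fin m) ℝ) (hgl : Lgl = L.toBlocks₁₂)
    (Llg : Matrix (Fin m) (Fin n) ℝ) (hlg : Llg = L.toBlocks₂₁)
    (Lll : Matrix (Fin m) (Fin m) ℝ) (hll : Lll = L.toBlocks₂₂)
    (hinv : IsUnit Lll.det) :
    (Lgg - Lgl * Lll⁻¹ * Llg).PosSemidef ∧
      (Lgg - Lgl * Lll⁻¹ * Llg).mulVec (fun _ => (1 : ℝ)) = 0 := by
  -- Lll is PSD as a principal submatrix
  have hLllpsd : Lll.PosSemidef := by
    rw [hll]; exact hpsd.submatrix Sum.inr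
  have hLllpd : Lll.PosDef := posDef_of_posSemidef_isUnit_det hLllpsd hinv
  have : Invertible Lll := hLllpd.isUnit.invertible
  -- Llg = Lglᴴ
  have hherm : Llg = Lglᴴ := by
    rw [hlg, hgl]
    ext i j
    simp [toBlocks₂₁, toBlocks₁₂, conjTranspose_apply]
    exact (congrFun (congrFun hsym (Sum.inl j)) (Sum.inr i)).symm ▸
      (by simpa using congrFun (congrFun hsym (Sum.inl j)) (Sum.inr i))
  -- block decomposition of L
  have hL : L = fromBlocks Lgg Lgl Llg Lll := by
    rw [hgg, hgl, hlg, hll, fromBlocks_toBlocks]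
  constructor
  · have := (PosDef.fromBlocks₂₂ Lgg Lgl hLllpd).1
    rw [← hherm, ← hL] at this
    simpa [hherm] using this hpsd
  · -- kernel part
    have h1 : (fun _ : Fin n ⊕ Fin m => (1:ℝ)) = Sum.elim (fun _ => (1:ℝ)) (fun _ => (1:ℝ)) := by
      ext x; cases x <;> rfl
    rw [hL, h1, fromBlocks_mulVec] at hrow
    have htop : Lgg *ᵥ (fun _ => (1:ℝ)) + Lgl *ᵥ (fun _ => (1:ℝ)) = 0 := by
      have := congrFun hrow
      ext i; simpa [Function.comp_def] using this (Sum.inl i)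
    have hbot : Llg *ᵥ (fun _ => (1:ℝ)) + Lll *ᵥ (fun _ => (1:ℝ)) = 0 := by
      have := congrFun hrow
      ext i; simpa [Function.comp_def] using this (Sum.inr i)
    have hlg1 : Llg *ᵥ (fun _ => (1:ℝ)) = -(Lll *ᵥ (fun _ => (1:ℝ))) := by
      exact eq_neg_of_add_eq_zero_left hbot
    have hinve : Lll⁻¹ *ᵥ (Lll *ᵥ (fun _ => (1:ℝ))) = (fun _ => (1:ℝ)) := by
      rw [mulVec_mulVec, nonsing_inv_mul _ hinv, one_mulVec]
    rw [sub_mulVec, Matrix.mul_assoc, ← mulVec_mulVec, ← mulVec_mulVec, hlg1,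
      mulVec_neg, hinve]
    rw [mulVec_neg, sub_neg_eq_add, htop]
end

section
/- Let A + GC be a Hurwitz matrix (all eigenvalues have negative real part) and suppose the quadruple (A+GC, −(B+GD), C, −D) has no invariant zeros and [B+GD; D] has full column rank. Consider ė = (A+GC)e − (B+GD)u, r = Ce − Du with e(0) = 0. Then r(t) = 0 for all t ≥ 0 implies u(t) = 0 for almost all t ≥ 0 (for piecewise-continuous u), and conversely u ≡ 0 implies r ≡ 0. -/
open Matrix

private lemma cvec_mulVec {k l : ℕ} (M : Matrix (Fin k) (Fin l) ℝ) (v : Fin l → ℝ) :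
    (M.map (Complex.ofReal ·)).mulVec (fun i => (v i : ℂ)) = fun i => ((M.mulVec v) i : ℂ) := by
  funext i
  have := (RingHom.map_mulVec Complex.ofRealHom M v i).symm
  exact this

/-- Consider the detection-filter error dynamics
`ė = (A+GC) e - (B+GD) u`, `r = C e - D u` with `e(0) = 0`, where `A + GC` is Hurwitz,
the quadruple `(A+GC, -(B+GD), C, -D)` has no invariant zeros (over `ℂ`), and
`[B+GD; D]` has full column rank.  Then, for a continuous input `u`, the residual satisfies
`r(t) = 0` for all `t ≥ 0` iff `u(t) = 0` for all `t ≥ 0`. -/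
theorem detection_filter_residual_zero_iff_attack_zero {n m p : ℕ}
    (A : Matrix (Fin n) (Fin n) ℝ) (B : Matrix (Fin n) (Fin m) ℝ)
    (C : Matrix (Fin p) (Fin n) ℝ) (D : Matrix (Fin p) (Fin m) ℝ)
    (G : Matrix (Fin n) (Fin p) ℝ)
    (hHurwitz : ∀ μ : ℂ, μ ∈ spectrum ℂ ((A + G * C).map (Complex.ofReal ·)) → μ.re < 0)
    (hnozeros : ∀ (s : ℂ) (w : Fin n → ℂ) (g : Fin m → ℂ),
      s • w - ((A + G * C).map (Complex.ofReal ·)).mulVec w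
          + ((B + G * D).map (Complex.ofReal ·)).mulVec g = 0 →
      (C.map (Complex.ofReal ·)).mulVec w - (D.map (Complex.ofReal ·)).mulVec g = 0 →
      w = 0 ∧ g = 0)
    (hrank : ∀ g : Fin m → ℝ, (B + G * D).mulVec g = 0 → D.mulVec g = 0 → g = 0)
    (e : ℝ → Fin n → ℝ) (u : ℝ → Fin m → ℝ) (hu : Continuous u)
    (he0 : e 0 = 0)
    (hode : ∀ t : ℝ, HasDerivAt e
      ((A + G * C).mulVec (e t) - (B + G * D).mulVec (u t)) t)
    (r : ℝ → Fin p → ℝ)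
    (hr : ∀ t : ℝ, r t = C.mulVec (e t) - D.mulVec (u t)) :
    (∀ t : ℝ, 0 ≤ t → r t = 0) ↔ (∀ t : ℝ, 0 ≤ t → u t = 0) := by
  set Aa : Matrix (Fin n) (Fin n) ℝ := A + G * C with hAadef
  set Bb : Matrix (Fin n) (Fin m) ℝ := B + G * D with hBbdef
  constructor
  · -- forward direction
    intro hrzero
    set V : Submodule ℝ (Fin n → ℝ) := Submodule.span ℝ (e '' Set.Ici 0) with hVdef
    have heV : ∀ t : ℝ, 0 ≤ t → e t ∈ V := fun t ht =>
      Submodule.subset_span ⟨t, ht, rfl⟩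
    have hVclosed : IsClosed (V : Set (Fin n → ℝ)) := Submodule.closed_of_finiteDimensional V
    have hCD : ∀ t : ℝ, 0 ≤ t → C.mulVec (e t) = D.mulVec (u t) := by
      intro t ht
      have h1 := hrzero t ht
      rw [hr t] at h1
      exact sub_eq_zero.mp h1
    have hderivV : ∀ t : ℝ, 0 ≤ t → Aa.mulVec (e t) - Bb.mulVec (u t) ∈ V := by
      intro t ht
      have hd : HasDerivWithinAt e (Aa.mulVec (e t) - Bb.mulVec (u t)) (Set.Ici t) t :=
        (hode t).hasDerivWithinAt
      rw [hasDerivWithinAt_iff_tendsto_slope] at hd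
      rw [Set.Ici_sdiff_left] at hd
      haveI : (nhdsWithin t (Set.Ioi t)).NeBot := nhdsWithin_Ioi_neBot (le_refl t)
      refine hVclosed.mem_of_tendsto hd ?_
      filter_upwards [self_mem_nhdsWithin] with s hs
      rw [slope_def_module]
      exact V.smul_mem _ (V.sub_mem (heV s (le_of_lt (lt_of_le_of_lt ht hs))) (heV t ht))
    -- the output-nulling-pair submodule S
    set f1 : ((Fin n → ℝ) × (Fin m → ℝ)) →ₗ[ℝ] (Fin n → ℝ) :=
      Aa.mulVecLin.comp (LinearMap.fst ℝ _ _) - Bb.mulVecLin.comp (LinearMap.snd ℝ _ _) with hf1def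
    set f2 : ((Fin n → ℝ) × (Fin m → ℝ)) →ₗ[ℝ] (Fin p → ℝ) :=
      C.mulVecLin.comp (LinearMap.fst ℝ _ _) - D.mulVecLin.comp (LinearMap.snd ℝ _ _) with hf2def
    set S : Submodule ℝ ((Fin n → ℝ) × (Fin m → ℝ)) := V.comap f1 ⊓ LinearMap.ker f2 with hSdef
    have hSmem : ∀ w g, ((w, g) ∈ S ↔
        (Aa.mulVec w - Bb.mulVec g ∈ V ∧ C.mulVec w = D.mulVec g)) := by
      intro w g
      simp only [hSdef, Submodule.mem_inf, Submodule.mem_comap, LinearMap.mem_ker, hf1def, hf2def,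
        LinearMap.sub_apply, LinearMap.comp_apply, LinearMap.fst_apply, LinearMap.snd_apply,
        Matrix.mulVecLin_apply, sub_eq_zero]
    have hVS : ∀ w ∈ V, ∃ g, (w, g) ∈ S := by
      intro w hw
      refine Submodule.span_induction ?_ ?_ ?_ ?_ hw
      · rintro x ⟨t, ht, rfl⟩
        exact ⟨u t, (hSmem _ _).mpr ⟨hderivV t ht, hCD t ht⟩⟩
      · exact ⟨0, (hSmem _ _).mpr (by simp)⟩
      · rintro x y hx hy ⟨gx, hgx⟩ ⟨gy, hgy⟩
        exact ⟨gx + gy, by simpa using S.add_mem hgx hgy⟩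
      · rintro a x hx ⟨gx, hgx⟩
        exact ⟨a • gx, by simpa [Prod.smul_mk] using S.smul_mem a hgx⟩
    -- construct a linear "friend" F
    let bV := Module.Basis.ofVectorSpace ℝ V
    choose gfun hgfun using fun i => hVS (bV i) (bV i).2
    let F₀ : V →ₗ[ℝ] (Fin m → ℝ) := bV.constr ℝ gfun
    let Φ : V →ₗ[ℝ] ((Fin n → ℝ) × (Fin m → ℝ)) := (V.subtype).prod F₀
    have hΦ : ∀ v : V, Φ v ∈ S := by
      have hspan : Submodule.span ℝ (Set.range bV) ≤ S.comap Φ := by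
        rw [Submodule.span_le]
        rintro _ ⟨i, rfl⟩
        have : Φ (bV i) = ((bV i : Fin n → ℝ), gfun i) := by
          simp only [Φ, LinearMap.prod_apply, LinearMap.coe_comp, Submodule.coe_subtype,
            Function.prod, F₀]
          rw [Module.Basis.constr_basis]
        simpa [Submodule.mem_comap, this] using hgfun i
      intro v
      have hv : v ∈ Submodule.span ℝ (Set.range bV) := by rw [bV.span_eq]; trivial
      exact hspan hv
    obtain ⟨F, hF⟩ := LinearMap.exists_extend F₀
    have hSw : ∀ w ∈ V, Aa.mulVec w - Bb.mulVec (F w) ∈ V ∧ C.mulVec w = D.mulVec (F w) := by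
      intro w hw
      have h1 := hΦ ⟨w, hw⟩
      have h2 : F w = F₀ ⟨w, hw⟩ := by
        simpa using LinearMap.congr_fun hF ⟨w, hw⟩
      rw [h2]
      exact (hSmem w (F₀ ⟨w, hw⟩)).mp h1
    set Fm : Matrix (Fin m) (Fin n) ℝ := LinearMap.toMatrix' F with hFmdef
    have hFm : ∀ w, Fm.mulVec w = F w := by
      intro w
      rw [← Matrix.toLin'_apply, hFmdef, Matrix.toLin'_toMatrix']
    set L : Matrix (Fin n) (Fin n) ℝ := Aa - Bb * Fm with hLdef
    have hLV : ∀ w ∈ V, L.mulVec w ∈ V := by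
      intro w hw
      have := (hSw w hw).1
      rw [← hFm] at this
      simpa [hLdef, Matrix.sub_mulVec, Matrix.mulVec_mulVec] using this
    -- complexification
    have hV0 : V = ⊥ := by
      by_contra hVne
      obtain ⟨w0, hw0V, hw0⟩ := V.ne_bot_iff.mp hVne
      set cv : (Fin n → ℝ) → (Fin n → ℂ) := fun v i => (v i : ℂ) with hcvdef
      set Vc : Submodule ℂ (Fin n → ℂ) := Submodule.span ℂ (cv '' (V : Set (Fin n → ℝ)))
        with hVcdef
      haveI : Nontrivial Vc := by
        refine Submodule.nontrivial_iff_ne_bot.mpr (Vc.ne_bot_iff.mpr ⟨cv w0,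
          Submodule.subset_span ⟨w0, hw0V, rfl⟩, fun hc => hw0 ?_⟩)
        funext i
        have := congrFun hc i
        simpa [hcvdef] using this
      set Lc : Matrix (Fin n) (Fin n) ℂ := L.map (Complex.ofReal ·) with hLcdef
      have hLcV : ∀ z ∈ Vc, Lc.mulVec z ∈ Vc := by
        intro z hz
        refine Submodule.span_induction ?_ ?_ ?_ ?_ hz
        · rintro x ⟨w, hwV, rfl⟩
          have : Lc.mulVec (cv w) = cv (L.mulVec w) := cvec_mulVec L w
          rw [this]
          exact Submodule.subset_span ⟨L.mulVec w, hLV w hwV, rfl⟩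
        · simp
        · intro x y _ _ hx hy
          rw [Matrix.mulVec_add]; exact Vc.add_mem hx hy
        · intro a x _ hx
          rw [Matrix.mulVec_smul]; exact Vc.smul_mem a hx
      set T : Vc →ₗ[ℂ] Vc := (Lc.mulVecLin).restrict
        (fun z hz => hLcV z hz) with hTdef
      obtain ⟨μ, hμ⟩ := Module.End.exists_eigenvalue T
      obtain ⟨z, hz⟩ := hμ.exists_hasEigenvector
      have hzval : Lc.mulVec (z : Fin n → ℂ) = μ • (z : Fin n → ℂ) := by
        have h1 : ((T z : Vc) : Fin n → ℂ) = Lc.mulVec (z : Fin n → ℂ) := by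
          rw [hTdef]; rfl
        have h2 : T z = μ • z := hz.apply_eq_smul
        rw [← h1, h2]; rfl
      set g : Fin m → ℂ := (Fm.map (Complex.ofReal ·)).mulVec (z : Fin n → ℂ) with hgdef
      have hLcsplit : Lc = Aa.map (Complex.ofReal ·)
          - (Bb.map (Complex.ofReal ·)) * (Fm.map (Complex.ofReal ·)) := by
        rw [hLcdef, hLdef]
        have hsub : (Aa - Bb * Fm).map (Complex.ofReal ·)
            = Aa.map (Complex.ofReal ·) - (Bb * Fm).map (Complex.ofReal ·) :=
          Matrix.map_sub (fun x : ℝ => (x : ℂ)) (by intro a b; push_cast; ring) Aa (Bb * Fm)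
        have hmul : (Bb * Fm).map (Complex.ofReal ·)
            = (Bb.map (Complex.ofReal ·)) * (Fm.map (Complex.ofReal ·)) := by
          ext i j
          simp only [Matrix.mul_apply, Matrix.map_apply]
          push_cast
          ring
        rw [hsub, hmul]
      have h1 : μ • (z : Fin n → ℂ) - (Aa.map (Complex.ofReal ·)).mulVec (z : Fin n → ℂ)
          + (Bb.map (Complex.ofReal ·)).mulVec g = 0 := by
        rw [← hzval, hLcsplit, Matrix.sub_mulVec, hgdef, Matrix.mulVec_mulVec]
        abel
      have h2 : (C.map (Complex.ofReal ·)).mulVec (z : Fin n → ℂ)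
          - (D.map (Complex.ofReal ·)).mulVec g = 0 := by
        rw [hgdef]
        have key : ∀ y ∈ Vc, (C.map (Complex.ofReal ·)).mulVec y
            - (D.map (Complex.ofReal ·)).mulVec ((Fm.map (Complex.ofReal ·)).mulVec y) = 0 := by
          intro y hy
          refine Submodule.span_induction ?_ ?_ ?_ ?_ hy
          · rintro x ⟨w, hwV, rfl⟩
            rw [cvec_mulVec, cvec_mulVec, cvec_mulVec, hFm, (hSw w hwV).2]
            simp
          · simp
          · intro x y _ _ hx hy
            rw [Matrix.mulVec_add, Matrix.mulVec_add, Matrix.mulVec_add]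
            rw [sub_eq_zero] at hx hy ⊢
            rw [hx, hy]
          · intro a x _ hx
            rw [Matrix.mulVec_smul, Matrix.mulVec_smul, Matrix.mulVec_smul]
            rw [sub_eq_zero] at hx ⊢
            rw [hx]
        exact key _ z.2
      have := (hnozeros μ (z : Fin n → ℂ) g h1 h2).1
      exact hz.2 (Subtype.ext this)
    have heq0 : ∀ t : ℝ, 0 ≤ t → e t = 0 := by
      intro t ht
      have := heV t ht
      rwa [hV0, Submodule.mem_bot] at this
    have hupos : ∀ t : ℝ, 0 < t → u t = 0 := by
      intro t ht
      have hD : D.mulVec (u t) = 0 := by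
        rw [← hCD t ht.le, heq0 t ht.le, Matrix.mulVec_zero]
      have hB : Bb.mulVec (u t) = 0 := by
        have h1 : HasDerivAt e (Aa.mulVec (e t) - Bb.mulVec (u t)) t := hode t
        have h2 : HasDerivAt e 0 t := by
          have heq : e =ᶠ[nhds t] fun _ => (0 : Fin n → ℝ) := by
            filter_upwards [isOpen_Ioi.mem_nhds ht] with s hs
            exact heq0 s (le_of_lt hs)
          exact (hasDerivAt_const t (0 : Fin n → ℝ)).congr_of_eventuallyEq heq
        have h3 := h1.unique h2
        rw [heq0 t ht.le, Matrix.mulVec_zero, zero_sub] at h3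
        exact neg_eq_zero.mp h3
      exact hrank _ hB hD
    intro t ht
    rcases eq_or_lt_of_le ht with h0 | hpos
    · subst h0
      haveI : (nhdsWithin (0:ℝ) (Set.Ioi 0)).NeBot := nhdsWithin_Ioi_neBot (le_refl (0:ℝ))
      have hlim1 : Filter.Tendsto u (nhdsWithin (0:ℝ) (Set.Ioi 0)) (nhds (u 0)) :=
        (hu.tendsto 0).mono_left nhdsWithin_le_nhds
      have hlim2 : Filter.Tendsto u (nhdsWithin (0:ℝ) (Set.Ioi 0)) (nhds 0) := by
        refine Filter.Tendsto.congr' ?_ tendsto_const_nhds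
        filter_upwards [self_mem_nhdsWithin] with s hs
        exact (hupos s hs).symm
      exact tendsto_nhds_unique hlim1 hlim2
    · exact hupos t hpos
  · -- converse direction
    intro hu0 t ht
    have he0' : e t = 0 := by
      have key : Set.EqOn e (fun _ => (0 : Fin n → ℝ)) (Set.Icc 0 t) := by
        set K : NNReal := ‖(Aa.mulVecLin.toContinuousLinearMap)‖₊ with hKdef
        refine ODE_solution_unique (v := fun _ x => Aa.mulVec x) (K := K)
          (fun _ => ?_) ?_ ?_ ?_ ?_ ?_
        · exact Aa.mulVecLin.toContinuousLinearMap.lipschitz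
        · exact (Continuous.continuousOn (continuous_iff_continuousAt.mpr
            fun s => (hode s).differentiableAt.continuousAt))
        · intro s hs
          have := (hode s).hasDerivWithinAt (s := Set.Ici s)
          rwa [hu0 s hs.1, Matrix.mulVec_zero, sub_zero] at this
        · exact continuousOn_const
        · intro s _
          simpa using (hasDerivWithinAt_const s (Set.Ici s) (0 : Fin n → ℝ))
        · simpa using he0
      exact key ⟨ht, le_refl t⟩
    rw [hr t, he0', hu0 t ht, Matrix.mulVec_zero, Matrix.mulVec_zero, sub_zero]
end

section
/- There exists an attack set K of cardinality at most k that is unidentifiable by a static detector if and only if there exists an attack set K̄ of cardinality at most 2k that is undetectable by a static detector. -/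
open Matrix

/-- A static attack vector for the attack set `K`: its nonzero entries are exactly those
indexed by `K`. -/
def IsStaticAttackVector {q : ℕ} (K : Finset (Fin q)) (g : Fin q → ℝ) : Prop :=
  ∀ i : Fin q, g i ≠ 0 ↔ i ∈ K

/-- The attack set `K` is undetectable by a Static Detector: some nonzero attack vector
supported exactly on `K` produces a measurement consistent with some state,
`C x + D g = 0` (by linearity). -/
def StaticallyUndetectable {n p q : ℕ} (C : Matrix (Fin p) (Fin n) ℝ)
    (D : Matrix (Fin p) (Fin q) ℝ) (K : Finset (Fin q)) : Prop :=
  ∃ (x : Fin n → ℝ) (g : Fin q → ℝ), g ≠ 0 ∧ IsStaticAttackVector K g ∧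
    C.mulVec x + D.mulVec g = 0

/-- The attack set `K` is unidentifiable by a Static Detector: its effect on the
measurements can be reproduced by a distinct attack set `R` with `|R| ≤ |K|`. -/
def StaticallyUnidentifiable {n p q : ℕ} (C : Matrix (Fin p) (Fin n) ℝ)
    (D : Matrix (Fin p) (Fin q) ℝ) (K : Finset (Fin q)) : Prop :=
  ∃ R : Finset (Fin q), R.card ≤ K.card ∧ R ≠ K ∧
    ∃ (xK xR : Fin n → ℝ) (gK gR : Fin q → ℝ),
      IsStaticAttackVector K gK ∧ IsStaticAttackVector R gR ∧
      C.mulVec xK + D.mulVec gK = C.mulVec xR + D.mulVec gR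

/-- Theorem 3.2.  There exists an attack set of cardinality at most `k`
that is unidentifiable by a Static Detector iff there exists an attack set of cardinality at
most `2k` that is undetectable by a Static Detector. -/
theorem static_unidentifiable_iff_static_undetectable_double {n p q : ℕ}
    (C : Matrix (Fin p) (Fin n) ℝ) (D : Matrix (Fin p) (Fin q) ℝ) (k : ℕ) :
    (∃ K : Finset (Fin q), K.card ≤ k ∧ StaticallyUnidentifiable C D K) ↔
    (∃ Kbar : Finset (Fin q), Kbar.card ≤ 2 * k ∧ StaticallyUndetectable C D Kbar) := by
  classical
  constructor
  · rintro ⟨K, hKk, R, hRK, hRneK, xK, xR, gK, gR, hgK, hgR, heq⟩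
    set g : Fin q → ℝ := gK - gR with hg
    set Kbar : Finset (Fin q) := Finset.univ.filter (fun i => g i ≠ 0) with hKbar
    refine ⟨Kbar, ?_, xK - xR, g, ?_, ?_, ?_⟩
    · have hsub : Kbar ⊆ K ∪ R := by
        intro i hi
        simp only [hKbar, Finset.mem_filter] at hi
        by_contra hc
        simp only [Finset.mem_union, not_or] at hc
        have h1 : gK i = 0 := by
          by_contra h; exact hc.1 ((hgK i).mp h)
        have h2 : gR i = 0 := by
          by_contra h; exact hc.2 ((hgR i).mp h)
        exact hi.2 (by simp [hg, h1, h2])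
      calc Kbar.card ≤ (K ∪ R).card := Finset.card_le_card hsub
        _ ≤ K.card + R.card := Finset.card_union_le _ _
        _ ≤ k + k := add_le_add hKk (le_trans hRK hKk)
        _ = 2 * k := by ring
    · -- g ≠ 0
      have : ∃ i, (i ∈ K ∧ i ∉ R) ∨ (i ∈ R ∧ i ∉ K) := by
        by_contra hc
        push_neg at hc
        exact hRneK (Finset.ext fun i => ⟨(hc i).2, (hc i).1⟩)
      obtain ⟨i, hi⟩ := this
      intro h0
      have hgi : g i = 0 := by rw [h0]; rfl
      rcases hi with ⟨hiK, hiR⟩ | ⟨hiR, hiK⟩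
      · have h1 : gK i ≠ 0 := (hgK i).mpr hiK
        have h2 : gR i = 0 := by by_contra h; exact hiR ((hgR i).mp h)
        simp [hg, h2] at hgi
        exact h1 hgi
      · have h1 : gR i ≠ 0 := (hgR i).mpr hiR
        have h2 : gK i = 0 := by by_contra h; exact hiK ((hgK i).mp h)
        simp [hg, h2] at hgi
        exact h1 (by linarith [hgi])
    · intro i
      simp [hKbar]
    · have h0 : C.mulVec xK + D.mulVec gK - (C.mulVec xR + D.mulVec gR) = 0 := by
        rw [heq]; abel
      rw [hg, Matrix.mulVec_sub, Matrix.mulVec_sub, ← h0]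
      abel
  · rintro ⟨Kbar, hKbk, x, g, hg0, hsupp, heq⟩
    set m := Kbar.card with hm
    have hm1 : 1 ≤ m := by
      obtain ⟨i, hi⟩ := Function.ne_iff.mp hg0
      have : i ∈ Kbar := (hsupp i).mp hi
      exact Finset.card_pos.mpr ⟨i, this⟩
    obtain ⟨K, hKsub, hKcard⟩ := Finset.exists_subset_card_eq
      (show (m + 1) / 2 ≤ Kbar.card by omega)
    set R : Finset (Fin q) := Kbar \ K with hR
    have hRcard : R.card = m - (m + 1) / 2 := by
      rw [hR, Finset.card_sdiff_of_subset hKsub, hKcard]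
    refine ⟨K, by omega, R, by omega, ?_, x, 0,
      (fun i => if i ∈ K then g i else 0), (fun i => if i ∈ R then -g i else 0),
      ?_, ?_, ?_⟩
    · -- R ≠ K
      intro hRK
      have hdisj : Disjoint R K := Finset.sdiff_disjoint
      rw [hRK] at hdisj
      have hKe : K = ⊥ := disjoint_self.mp hdisj
      rw [hKe] at hKcard
      simp [Finset.bot_eq_empty] at hKcard
      omega
    · intro i
      constructor
      · intro h
        by_contra hc
        simp [hc] at h
      · intro h
        have : g i ≠ 0 := (hsupp i).mpr (hKsub h)
        simpa [h] using this
    · intro i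
      constructor
      · intro h
        by_contra hc
        simp [hc] at h
      · intro h
        have : g i ≠ 0 := (hsupp i).mpr (Finset.sdiff_subset h)
        simpa [h] using this
    · have hsplit : g = (fun i => if i ∈ K then g i else 0)
          - (fun i => if i ∈ R then -g i else 0) := by
        funext i
        by_cases hK : i ∈ K
        · have hnR : i ∉ R := by simp [hR, hK]
          simp [hK, hnR]
        · by_cases hKb : i ∈ Kbar
          · have hiR : i ∈ R := by simp [hR, hKb, hK]
            simp [hK, hiR]
          · have : g i = 0 := by
              by_contra h; exact hKb ((hsupp i).mp h)
            have hnR : i ∉ R := fun h => hKb (Finset.sdiff_subset h)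
            simp [hK, hnR, this]
      rw [hsplit, Matrix.mulVec_sub] at heq
      rw [Matrix.mulVec_zero, zero_add]
      rw [← sub_eq_zero, ← heq]
      abel
end
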